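/- arXiv:2207.04686 — 2 statements merged into one kernel-verified Lean document; each statement's English description precedes it below -/
import Mathlib

section
/- Let x_j, …, x_{T−1} ∈ ℝ^d be i.i.d. random vectors with E[x xᵀ] = H, smallest eigenvalue λ_min(H) = μ > 0, and E[‖x‖₂² x xᵀ] ⪯ R_x²·H. Let B_t = I − η·x_t x_tᵀ and let z ∈ ℝ^d be a random vector independent of all B_t. Then for any β > 0 and any stepsize η < 1/R_x², with probability at least 1 − β: ‖B_{T−1}·B_{T−2}⋯B_j·z‖² ≤ (1/β)·e^{−ημ(T−j)}·‖z‖². -/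
set_option autoImplicit false


open MeasureTheory ProbabilityTheory Real Matrix
open scoped ENNReal NNReal RealInnerProductSpace BigOperators

noncomputable section

abbrev Vec (d : ℕ) : Type := EuclideanSpace ℝ (Fin d)

/-- The smallest eigenvalue of a Hermitian matrix. -/
def lamMin {n : ℕ} {A : Matrix (Fin n) (Fin n) ℝ} (hA : A.IsHermitian) : ℝ :=
  ⨅ i, hA.eigenvalues i

/-- Action of the matrix `I − η x xᵀ` on a vector `v`. -/
def Bapp {d : ℕ} (η : ℝ) (x v : Vec d) : Vec d := v - η • (⟪x, v⟫ • x)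

/-- `chainB η x j z k = B_{j+k-1} ⋯ B_{j+1} B_j z` where `B_t = I − η x_t x_tᵀ`. -/
def chainB {d : ℕ} (η : ℝ) (x : ℕ → Vec d) (j : ℕ) (z : Vec d) : ℕ → Vec d
  | 0 => z
  | k + 1 => Bapp η (x (j + k)) (chainB η x j z k)

/-- Extension of a `Fin N`-indexed family to `ℕ` by zero. -/
def ext0 {β : Type*} [Zero β] {N : ℕ} (f : Fin N → β) : ℕ → β :=
  fun t => if h : t < N then f ⟨t, h⟩ else 0



set_option maxHeartbeats 1000000

section Aux

lemma Bapp_norm_sq {d : ℕ} (η : ℝ) (x v : Vec d) :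
    ‖Bapp η x v‖^2 = ‖v‖^2 - 2*η*⟪x,v⟫^2 + η^2 * (‖x‖^2 * ⟪x,v⟫^2) := by
  unfold Bapp
  rw [norm_sub_sq_real]
  rw [real_inner_smul_right, real_inner_smul_right, real_inner_comm v x]
  rw [norm_smul, norm_smul]
  simp only [Real.norm_eq_abs, mul_pow, sq_abs]
  ring

lemma rayleigh_lb (d : ℕ) (H : Matrix (Fin d) (Fin d) ℝ) (hHherm : H.IsHermitian) (μ : ℝ)
    (hμdef : μ = ⨅ i, hHherm.eigenvalues i) (v : Fin d → ℝ) :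
    μ * (v ⬝ᵥ v) ≤ v ⬝ᵥ (H *ᵥ v) := by
  have hpsd : (H - μ • 1).PosSemidef := by
    have hU : (hHherm.eigenvectorUnitary : Matrix (Fin d) (Fin d) ℝ) ∈ Matrix.unitaryGroup (Fin d) ℝ :=
      hHherm.eigenvectorUnitary.2
    have hspec := hHherm.spectral_theorem
    rw [Unitary.conjStarAlgAut_apply] at hspec
    have h1 : H - μ • 1 = (hHherm.eigenvectorUnitary : Matrix (Fin d) (Fin d) ℝ) *
        (Matrix.diagonal (fun i => hHherm.eigenvalues i - μ)) *
        star (hHherm.eigenvectorUnitary : Matrix (Fin d) (Fin d) ℝ) := by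
      have hd : (Matrix.diagonal (fun i => hHherm.eigenvalues i - μ)) =
          Matrix.diagonal (RCLike.ofReal ∘ hHherm.eigenvalues) - μ • 1 := by
        simp [Matrix.diagonal_sub, Matrix.smul_eq_diagonal_mul]
      rw [hd, Matrix.mul_sub, Matrix.sub_mul, ← hspec]
      congr 1
      rw [Matrix.mul_smul, Matrix.smul_mul, mul_one]
      congr 1
      exact (Matrix.mem_unitaryGroup_iff.mp hU).symm
    rw [h1]
    apply Matrix.PosSemidef.mul_mul_conjTranspose_same
    refine Matrix.posSemidef_diagonal_iff.mpr fun i => ?_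
    rw [hμdef, sub_nonneg]
    exact ciInf_le (Set.Finite.bddBelow (Set.finite_range _)) i
  have h2 := hpsd.dotProduct_mulVec_nonneg v
  simp only [Matrix.sub_mulVec, Matrix.smul_mulVec, Matrix.one_mulVec,
    dotProduct_sub, dotProduct_smul, star_trivial, RCLike.re_to_real,
    smul_eq_mul, sub_nonneg] at h2
  linarith

lemma coord_abs_le {d : ℕ} (x : Vec d) (i : Fin d) : |x i| ≤ ‖x‖ := by
  rw [EuclideanSpace.norm_eq]
  rw [← Real.sqrt_sq_eq_abs]
  apply Real.sqrt_le_sqrt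
  simpa [sq_abs] using Finset.single_le_sum (f := fun k => ‖x k‖^2)
    (fun k _ => sq_nonneg _) (Finset.mem_univ i)

lemma coord_continuous {d : ℕ} (i : Fin d) : Continuous (fun x : Vec d => x i) :=
  (continuous_apply i).comp (PiLp.continuous_ofLp (p := 2) (β := fun _ : Fin d => ℝ))

lemma integrable_coord2 {d : ℕ} {ν : Measure (Vec d)}
    (hmom : Integrable (fun x : Vec d => ‖x‖ ^ 2) ν) (i k : Fin d) :
    Integrable (fun x : Vec d => x i * x k) ν := by
  refine hmom.mono ?_ (ae_of_all _ fun x => ?_)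
  · exact (((coord_continuous i).mul (coord_continuous k)).aestronglyMeasurable)
  · have h1 := coord_abs_le x i
    have h2 := coord_abs_le x k
    have hn : (0:ℝ) ≤ ‖x‖ := norm_nonneg x
    simp only [Real.norm_eq_abs, abs_mul, sq_abs, abs_norm]
    calc |x i| * |x k| ≤ ‖x‖ * ‖x‖ := mul_le_mul h1 h2 (abs_nonneg _) hn
    _ = ‖x‖^2 := (sq ‖x‖).symm
    _ ≤ |‖x‖^2| := le_abs_self _

lemma integrable_coord4 {d : ℕ} {ν : Measure (Vec d)}
    (hmom4 : Integrable (fun x : Vec d => ‖x‖ ^ 4) ν) (i k : Fin d) :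
    Integrable (fun x : Vec d => ‖x‖^2 * (x i * x k)) ν := by
  refine hmom4.mono ?_ (ae_of_all _ fun x => ?_)
  · exact ((continuous_norm.pow 2).mul
      ((coord_continuous i).mul (coord_continuous k))).aestronglyMeasurable
  · have h1 := coord_abs_le x i
    have h2 := coord_abs_le x k
    have hn : (0:ℝ) ≤ ‖x‖ := norm_nonneg x
    simp only [Real.norm_eq_abs, abs_mul, sq_abs, abs_norm, abs_pow]
    calc ‖x‖^2 * (|x i| * |x k|) ≤ ‖x‖^2 * (‖x‖ * ‖x‖) := by
          apply mul_le_mul_of_nonneg_left (mul_le_mul h1 h2 (abs_nonneg _) hn) (sq_nonneg _)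
    _ = ‖x‖^4 := by ring

lemma inner_sq_expand {d : ℕ} (x v : Vec d) :
    ⟪x,v⟫^2 = ∑ i, ∑ k, (v i * v k) * (x i * x k) := by
  have : ⟪x,v⟫ = ∑ i, x i * v i := by
    simp [PiLp.inner_apply, RCLike.inner_apply, mul_comm]
  rw [this, sq, Finset.sum_mul_sum]
  exact Finset.sum_congr rfl fun i _ => Finset.sum_congr rfl fun k _ => by ring

lemma integral_inner_sq {d : ℕ} {ν : Measure (Vec d)}
    (hmom : Integrable (fun x : Vec d => ‖x‖ ^ 2) ν)
    (H : Matrix (Fin d) (Fin d) ℝ) (hH : ∀ i k, H i k = ∫ x, x i * x k ∂ν) (v : Vec d) :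
    ∫ x, ⟪x,v⟫^2 ∂ν = (fun i => v i) ⬝ᵥ (H *ᵥ fun i => v i) := by
  have hint : ∀ i k : Fin d, Integrable (fun x : Vec d => (v i * v k) * (x i * x k)) ν :=
    fun i k => (integrable_coord2 hmom i k).const_mul _
  calc ∫ x, ⟪x,v⟫^2 ∂ν = ∫ x, ∑ i, ∑ k, (v i * v k) * (x i * x k) ∂ν := by
        simp_rw [inner_sq_expand]
  _ = ∑ i, ∫ x, ∑ k, (v i * v k) * (x i * x k) ∂ν :=
        integral_finset_sum _ (fun i _ => integrable_finset_sum _ (fun k _ => hint i k))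
  _ = ∑ i, ∑ k, ∫ x, (v i * v k) * (x i * x k) ∂ν :=
        Finset.sum_congr rfl fun i _ => integral_finset_sum _ (fun k _ => hint i k)
  _ = ∑ i, ∑ k, (v i * v k) * H i k := by
        simp_rw [MeasureTheory.integral_const_mul, hH]
  _ = (fun i => v i) ⬝ᵥ (H *ᵥ fun i => v i) := by
        simp [dotProduct, Matrix.mulVec, Finset.mul_sum]
        exact Finset.sum_congr rfl fun i _ => Finset.sum_congr rfl fun k _ => by ring

lemma integral_inner_sq4 {d : ℕ} {ν : Measure (Vec d)}
    (hmom4 : Integrable (fun x : Vec d => ‖x‖ ^ 4) ν)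
    (M4 : Matrix (Fin d) (Fin d) ℝ)
    (hM4 : ∀ i k, M4 i k = ∫ x, ‖x‖ ^ 2 * (x i * x k) ∂ν) (v : Vec d) :
    ∫ x, ‖x‖^2 * ⟪x,v⟫^2 ∂ν = (fun i => v i) ⬝ᵥ (M4 *ᵥ fun i => v i) := by
  have hint : ∀ i k : Fin d, Integrable (fun x : Vec d => (v i * v k) * (‖x‖^2 * (x i * x k))) ν :=
    fun i k => (integrable_coord4 hmom4 i k).const_mul _
  calc ∫ x, ‖x‖^2 * ⟪x,v⟫^2 ∂ν
      = ∫ x, ∑ i, ∑ k, (v i * v k) * (‖x‖^2 * (x i * x k)) ∂ν := by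
        congr 1; funext x
        rw [inner_sq_expand, Finset.mul_sum]
        refine Finset.sum_congr rfl fun i _ => ?_
        rw [Finset.mul_sum]
        exact Finset.sum_congr rfl fun k _ => by ring
  _ = ∑ i, ∫ x, ∑ k, (v i * v k) * (‖x‖^2 * (x i * x k)) ∂ν :=
        integral_finset_sum _ (fun i _ => integrable_finset_sum _ (fun k _ => hint i k))
  _ = ∑ i, ∑ k, ∫ x, (v i * v k) * (‖x‖^2 * (x i * x k)) ∂ν :=
        Finset.sum_congr rfl fun i _ => integral_finset_sum _ (fun k _ => hint i k)
  _ = ∑ i, ∑ k, (v i * v k) * M4 i k := by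
        simp_rw [MeasureTheory.integral_const_mul, hM4]
  _ = (fun i => v i) ⬝ᵥ (M4 *ᵥ fun i => v i) := by
        simp [dotProduct, Matrix.mulVec, Finset.mul_sum]
        exact Finset.sum_congr rfl fun i _ => Finset.sum_congr rfl fun k _ => by ring

lemma step_bound {d : ℕ} {ν : Measure (Vec d)} [IsProbabilityMeasure ν]
    (hmom : Integrable (fun x : Vec d => ‖x‖ ^ 2) ν)
    (hmom4 : Integrable (fun x : Vec d => ‖x‖ ^ 4) ν)
    (H M4 : Matrix (Fin d) (Fin d) ℝ)
    (hH : ∀ i k, H i k = ∫ x, x i * x k ∂ν)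
    (hM4 : ∀ i k, M4 i k = ∫ x, ‖x‖ ^ 2 * (x i * x k) ∂ν)
    (hHherm : H.IsHermitian) (μ : ℝ) (hμdef : μ = ⨅ i, hHherm.eigenvalues i) (hμ : 0 < μ)
    (Rx : ℝ) (hRx : (Rx ^ 2 • H - M4).PosSemidef)
    (η : ℝ) (hη0 : 0 < η) (hη : η < 1 / Rx ^ 2) (v : Vec d) :
    ∫⁻ x, ENNReal.ofReal (‖Bapp η x v‖^2) ∂ν ≤
      ENNReal.ofReal (Real.exp (-(η*μ)) * ‖v‖^2) := by
  have hRxpos : 0 < Rx ^ 2 := by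
    rcases eq_or_ne Rx 0 with h | h
    · exfalso; rw [h] at hη; simp at hη; linarith
    · positivity
  have hηRx : η * Rx ^ 2 ≤ 1 := by
    rw [lt_div_iff₀ hRxpos] at hη; linarith
  set QH : ℝ := (fun i => v i) ⬝ᵥ (H *ᵥ fun i => v i) with hQH
  set QM : ℝ := (fun i => v i) ⬝ᵥ (M4 *ᵥ fun i => v i) with hQM
  have hnorm : ‖v‖^2 = (fun i => v i) ⬝ᵥ (fun i => v i) := by
    rw [← real_inner_self_eq_norm_sq]
    simp [PiLp.inner_apply, RCLike.inner_apply, dotProduct]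
    rw [EuclideanSpace.norm_sq_eq]; simp [sq]
  have hQHlb : μ * ‖v‖^2 ≤ QH := by
    rw [hnorm]; exact rayleigh_lb d H hHherm μ hμdef _
  have hQH0 : 0 ≤ QH := le_trans (by positivity) hQHlb
  have hQMub : QM ≤ Rx^2 * QH := by
    have h2 := hRx.dotProduct_mulVec_nonneg (fun i => v i)
    simp only [Matrix.sub_mulVec, Matrix.smul_mulVec,
      dotProduct_sub, dotProduct_smul, star_trivial, RCLike.re_to_real,
      smul_eq_mul, sub_nonneg] at h2
    exact h2
  have hint1 : Integrable (fun x : Vec d => ⟪x,v⟫^2) ν := by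
    have : (fun x : Vec d => ⟪x,v⟫^2) =
        fun x => ∑ i, ∑ k, (v i * v k) * (x i * x k) := funext fun x => inner_sq_expand x v
    rw [this]
    exact integrable_finset_sum _ fun i _ => integrable_finset_sum _
      fun k _ => (integrable_coord2 hmom i k).const_mul _
  have hint2 : Integrable (fun x : Vec d => ‖x‖^2 * ⟪x,v⟫^2) ν := by
    have : (fun x : Vec d => ‖x‖^2 * ⟪x,v⟫^2) =
        fun x => ∑ i, ∑ k, (v i * v k) * (‖x‖^2 * (x i * x k)) := by
      funext x
      rw [inner_sq_expand, Finset.mul_sum]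
      refine Finset.sum_congr rfl fun i _ => ?_
      rw [Finset.mul_sum]
      exact Finset.sum_congr rfl fun k _ => by ring
    rw [this]
    exact integrable_finset_sum _ fun i _ => integrable_finset_sum _
      fun k _ => (integrable_coord4 hmom4 i k).const_mul _
  have hf_eq : (fun x : Vec d => ‖Bapp η x v‖^2) =
      fun x => ‖v‖^2 - 2*η*⟪x,v⟫^2 + η^2 * (‖x‖^2 * ⟪x,v⟫^2) :=
    funext fun x => Bapp_norm_sq η x v
  have hint : Integrable (fun x : Vec d => ‖Bapp η x v‖^2) ν := by
    rw [hf_eq]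
    exact (((integrable_const _).sub ((hint1.const_mul (2*η)))).add
      ((hint2.const_mul (η^2))))
  have hA : Integrable (fun x : Vec d => ‖v‖^2 - 2*η*⟪x,v⟫^2) ν :=
    (integrable_const _).sub (hint1.const_mul _)
  have hB : Integrable (fun x : Vec d => η^2 * (‖x‖^2 * ⟪x,v⟫^2)) ν := hint2.const_mul _
  have hC : Integrable (fun _ : Vec d => ‖v‖^2) ν := integrable_const _
  have hD : Integrable (fun x : Vec d => 2*η*⟪x,v⟫^2) ν := hint1.const_mul _
  have hI : ∫ x, ‖Bapp η x v‖^2 ∂ν = ‖v‖^2 - 2*η*QH + η^2 * QM := by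
    rw [hf_eq]
    rw [integral_add hA hB, integral_sub hC hD]
    simp only [integral_const, measure_univ, probReal_univ, ENNReal.toReal_one, one_smul, smul_eq_mul]
    rw [MeasureTheory.integral_const_mul, MeasureTheory.integral_const_mul,
      integral_inner_sq hmom H hH v, integral_inner_sq4 hmom4 M4 hM4 v]
    rw [← hQH, ← hQM]
    ring
  have hbound : ∫ x, ‖Bapp η x v‖^2 ∂ν ≤ Real.exp (-(η*μ)) * ‖v‖^2 := by
    rw [hI]
    have h1 : ‖v‖^2 - 2*η*QH + η^2 * QM ≤ (1 - η*μ) * ‖v‖^2 := by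
      have h2 : η^2 * QM ≤ η * QH := by
        calc η^2 * QM ≤ η^2 * (Rx^2 * QH) := by
              apply mul_le_mul_of_nonneg_left hQMub (sq_nonneg _)
        _ = (η * Rx^2) * (η * QH) := by ring
        _ ≤ 1 * (η * QH) := by
              apply mul_le_mul_of_nonneg_right hηRx (by positivity)
        _ = η * QH := one_mul _
      nlinarith [hQHlb, hη0.le]
    have h3 : (1 - η*μ) * ‖v‖^2 ≤ Real.exp (-(η*μ)) * ‖v‖^2 := by
      apply mul_le_mul_of_nonneg_right _ (sq_nonneg _)
      have := Real.add_one_le_exp (-(η*μ))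
      linarith
    linarith
  rw [← ofReal_integral_eq_lintegral_ofReal hint (ae_of_all _ fun x => sq_nonneg _)]
  exact ENNReal.ofReal_le_ofReal hbound

lemma chainB_front {d : ℕ} (η : ℝ) (x : ℕ → Vec d) (j : ℕ) (z : Vec d) (k : ℕ) :
    chainB η x j z (k+1) = chainB η x (j+1) (Bapp η (x j) z) k := by
  induction k with
  | zero => simp [chainB]
  | succ k ih =>
      have hidx : j + (k+1) = (j+1) + k := by omega
      show Bapp η (x (j + (k+1))) (chainB η x j z (k+1)) =
        Bapp η (x ((j+1) + k)) (chainB η x (j+1) (Bapp η (x j) z) k)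
      rw [ih, hidx]

lemma Bapp_zero {d : ℕ} (η : ℝ) (x : Vec d) : Bapp η x 0 = 0 := by
  simp [Bapp]

lemma chainB_zero {d : ℕ} (η : ℝ) (x : ℕ → Vec d) (j k : ℕ) :
    chainB η x j 0 k = 0 := by
  induction k with
  | zero => rfl
  | succ k ih => show Bapp η _ (chainB η x j 0 k) = 0; rw [ih, Bapp_zero]

lemma continuous_Bapp {d : ℕ} (η : ℝ) :
    Continuous (fun p : Vec d × Vec d => Bapp η p.1 p.2) := by
  unfold Bapp
  exact continuous_snd.sub (((continuous_fst.inner (𝕜 := ℝ) continuous_snd).smul continuous_fst).const_smul η)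

lemma measurable_chain {d T : ℕ} (η : ℝ) (j k : ℕ) :
    Measurable (fun ω : (Fin T → Vec d) × Vec d => chainB η (ext0 ω.1) j ω.2 k) := by
  induction k with
  | zero => exact measurable_snd
  | succ k ih =>
      show Measurable fun ω : (Fin T → Vec d) × Vec d =>
        Bapp η (ext0 ω.1 (j+k)) (chainB η (ext0 ω.1) j ω.2 k)
      have hx : Measurable (fun ω : (Fin T → Vec d) × Vec d => ext0 ω.1 (j+k)) := by
        rcases lt_or_ge (j+k) T with h | h
        · have : (fun ω : (Fin T → Vec d) × Vec d => ext0 ω.1 (j+k)) =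
              fun ω => ω.1 ⟨j+k, h⟩ := by
            funext ω; simp [ext0, h]
          rw [this]
          exact (measurable_pi_apply _).comp measurable_fst
        · have : (fun ω : (Fin T → Vec d) × Vec d => ext0 ω.1 (j+k)) = fun _ => 0 := by
            funext ω; simp [ext0, Nat.not_lt.mpr h]
          rw [this]; exact measurable_const
      exact (continuous_Bapp η).measurable.comp (hx.prodMk ih)

lemma measurable_chain_fst {d T : ℕ} (η : ℝ) (j k : ℕ) (z : Vec d) :
    Measurable (fun x : Fin T → Vec d => chainB η (ext0 x) j z k) :=
  (measurable_chain η j k).comp (measurable_id.prodMk measurable_const)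

lemma measurable_chain_fn {d T : ℕ} (η : ℝ) (j k : ℕ) (z : Vec d) :
    Measurable (fun x : Fin T → Vec d => ENNReal.ofReal (‖chainB η (ext0 x) j z k‖^2)) :=
  ((measurable_chain_fst η j k z).norm.pow_const 2).ennreal_ofReal

lemma chain_lmarg {d T : ℕ} {ν : Measure (Vec d)} [IsProbabilityMeasure ν] (η μ : ℝ)
    (hstep : ∀ v : Vec d, ∫⁻ x, ENNReal.ofReal (‖Bapp η x v‖^2) ∂ν ≤
      ENNReal.ofReal (Real.exp (-(η*μ)) * ‖v‖^2)) :
    ∀ (k j : ℕ) (z : Vec d) (s : Finset (Fin T)),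
    j + k ≤ T → (∀ i : Fin T, j ≤ (i:ℕ) → (i:ℕ) < j + k → i ∈ s) →
    ∀ x₀ : Fin T → Vec d,
    MeasureTheory.lmarginal (fun _ : Fin T => ν) s
      (fun x => ENNReal.ofReal (‖chainB η (ext0 x) j z k‖^2)) x₀ ≤
      ENNReal.ofReal (Real.exp (-(η*μ))^k * ‖z‖^2) := by
  intro k
  induction k with
  | zero =>
      intro j z s hjk hs x₀
      simp [MeasureTheory.lmarginal, chainB]
  | succ k ih =>
      intro j z s hjk hs x₀
      have hjT : j < T := by omega
      set i0 : Fin T := ⟨j, hjT⟩ with hi0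
      have hi0v : (i0 : ℕ) = j := rfl
      have hi0s : i0 ∈ s := hs i0 (by omega) (by omega)
      have hins : s = insert i0 (s.erase i0) := (Finset.insert_erase hi0s).symm
      rw [hins, MeasureTheory.lmarginal_insert _ (measurable_chain_fn η j (k+1) z)
        (Finset.notMem_erase i0 s)]
      have key : ∀ y : Vec d,
          MeasureTheory.lmarginal (fun _ : Fin T => ν) (s.erase i0)
            (fun x => ENNReal.ofReal (‖chainB η (ext0 x) j z (k+1)‖^2))
            (Function.update x₀ i0 y) ≤
          ENNReal.ofReal (Real.exp (-(η*μ))^k * ‖Bapp η y z‖^2) := by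
        intro y
        have heq : MeasureTheory.lmarginal (fun _ : Fin T => ν) (s.erase i0)
            (fun x => ENNReal.ofReal (‖chainB η (ext0 x) j z (k+1)‖^2))
            (Function.update x₀ i0 y) =
          MeasureTheory.lmarginal (fun _ : Fin T => ν) (s.erase i0)
            (fun x => ENNReal.ofReal (‖chainB η (ext0 x) (j+1) (Bapp η y z) k‖^2))
            (Function.update x₀ i0 y) := by
          unfold MeasureTheory.lmarginal
          refine lintegral_congr fun yy => ?_
          have h1 : ext0 (Function.updateFinset (Function.update x₀ i0 y) (s.erase i0) yy) j = y := by
            have : (Function.updateFinset (Function.update x₀ i0 y) (s.erase i0) yy) i0 = y := by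
              rw [Function.updateFinset]
              simp [Finset.notMem_erase i0 s]
            simpa [ext0, hjT, hi0] using this
          beta_reduce
          rw [chainB_front, h1]
        rw [heq]
        exact ih (j+1) (Bapp η y z) (s.erase i0) (by omega)
          (fun i h1 h2 => Finset.mem_erase.mpr
            ⟨by simp [hi0]; omega, hs i (by omega) (by omega)⟩) _
      calc ∫⁻ y, MeasureTheory.lmarginal (fun _ : Fin T => ν) (s.erase i0)
            (fun x => ENNReal.ofReal (‖chainB η (ext0 x) j z (k+1)‖^2))
            (Function.update x₀ i0 y) ∂ν
          ≤ ∫⁻ y, ENNReal.ofReal (Real.exp (-(η*μ))^k * ‖Bapp η y z‖^2) ∂ν :=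
            lintegral_mono key
        _ = ENNReal.ofReal (Real.exp (-(η*μ))^k) * ∫⁻ y, ENNReal.ofReal (‖Bapp η y z‖^2) ∂ν := by
            rw [← lintegral_const_mul _ (by
              exact (((continuous_Bapp η).measurable.comp
                (measurable_id.prodMk measurable_const)).norm.pow_const 2).ennreal_ofReal)]
            refine lintegral_congr fun y => ?_
            rw [ENNReal.ofReal_mul (by positivity)]
        _ ≤ ENNReal.ofReal (Real.exp (-(η*μ))^k) * ENNReal.ofReal (Real.exp (-(η*μ)) * ‖z‖^2) :=
            mul_le_mul_right (hstep z) _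
        _ = ENNReal.ofReal (Real.exp (-(η*μ))^(k+1) * ‖z‖^2) := by
            rw [← ENNReal.ofReal_mul (by positivity)]
            congr 1
            ring

lemma chain_lintegral {d T : ℕ} {ν : Measure (Vec d)} [IsProbabilityMeasure ν] (η μ : ℝ)
    (hstep : ∀ v : Vec d, ∫⁻ x, ENNReal.ofReal (‖Bapp η x v‖^2) ∂ν ≤
      ENNReal.ofReal (Real.exp (-(η*μ)) * ‖v‖^2))
    (k j : ℕ) (z : Vec d) (hjk : j + k ≤ T) :
    ∫⁻ x, ENNReal.ofReal (‖chainB η (ext0 x) j z k‖^2)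
        ∂(Measure.pi fun _ : Fin T => ν) ≤
      ENNReal.ofReal (Real.exp (-(η*μ))^k * ‖z‖^2) := by
  rw [MeasureTheory.lintegral_eq_lmarginal_univ (fun _ => 0)]
  exact chain_lmarg η μ hstep k j z Finset.univ hjk
    (fun i _ _ => Finset.mem_univ i) _

end Aux

/-- Lemma A.3 of the paper. Let `x_j, …, x_{T−1}` be i.i.d. with
`E[x xᵀ] = H`, smallest eigenvalue `μ > 0` and `E[‖x‖² x xᵀ] ⪯ R_x² H`, let
`B_t = I − η x_t x_tᵀ`, and let `z` be independent of all `B_t`. For `0 < η < 1/R_x²`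
and `β > 0`, with probability at least `1 − β`,
`‖B_{T−1} ⋯ B_j z‖² ≤ (1/β) e^{−ημ(T−j)} ‖z‖²`. -/
theorem chain_contraction_high_prob
    (d T j : ℕ) (hd : 0 < d) (hjT : j ≤ T)
    (ν : Measure (Vec d)) [IsProbabilityMeasure ν]
    (νz : Measure (Vec d)) [IsProbabilityMeasure νz]
    (hmom : Integrable (fun x : Vec d => ‖x‖ ^ 2) ν)
    (hmom4 : Integrable (fun x : Vec d => ‖x‖ ^ 4) ν)
    (H M4 : Matrix (Fin d) (Fin d) ℝ)
    (hH : ∀ i k, H i k = ∫ x, x i * x k ∂ν)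
    (hM4 : ∀ i k, M4 i k = ∫ x, ‖x‖ ^ 2 * (x i * x k) ∂ν)
    (hHherm : H.IsHermitian) (μ : ℝ) (hμdef : μ = lamMin hHherm) (hμ : 0 < μ)
    (Rx : ℝ) (hRx : (Rx ^ 2 • H - M4).PosSemidef)
    (η : ℝ) (hη0 : 0 < η) (hη : η < 1 / Rx ^ 2)
    (β : ℝ) (hβ : 0 < β) :
    1 - ENNReal.ofReal β ≤
      ((Measure.pi fun _ : Fin T => ν).prod νz)
        {ω : (Fin T → Vec d) × Vec d |
          ‖chainB η (ext0 ω.1) j ω.2 (T - j)‖ ^ 2 ≤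
            (1 / β) * Real.exp (-(η * μ) * ((T - j : ℕ) : ℝ)) * ‖ω.2‖ ^ 2} := by
  set k := T - j with hk
  set P : Measure (Fin T → Vec d) := Measure.pi fun _ : Fin T => ν with hP
  set c : ℝ := (1 / β) * Real.exp (-(η * μ) * (k : ℝ)) with hc
  have hcpos : 0 < c := by positivity
  have hstep : ∀ v : Vec d, ∫⁻ x, ENNReal.ofReal (‖Bapp η x v‖^2) ∂ν ≤
      ENNReal.ofReal (Real.exp (-(η*μ)) * ‖v‖^2) :=
    step_bound hmom hmom4 H M4 hH hM4 hHherm μ (by rw [hμdef]; rfl) hμ Rx hRx η hη0 hη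
  set G : Set ((Fin T → Vec d) × Vec d) :=
    {ω | ‖chainB η (ext0 ω.1) j ω.2 k‖ ^ 2 ≤ c * ‖ω.2‖ ^ 2} with hG
  have hmeas1 : Measurable (fun ω : (Fin T → Vec d) × Vec d =>
      ‖chainB η (ext0 ω.1) j ω.2 k‖ ^ 2) := (measurable_chain η j k).norm.pow_const 2
  have hmeas2 : Measurable (fun ω : (Fin T → Vec d) × Vec d => c * ‖ω.2‖ ^ 2) :=
    (measurable_snd.norm.pow_const 2).const_mul c
  have hGm : MeasurableSet G := measurableSet_le hmeas1 hmeas2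
  have hEk : Real.exp (-(η*μ))^k = Real.exp (-(η * μ) * (k : ℝ)) := by
    rw [← Real.exp_nat_mul]; ring_nf
  have hcompl : (P.prod νz) Gᶜ ≤ ENNReal.ofReal β := by
    rw [Measure.prod_apply_symm hGm.compl]
    have hz_bound : ∀ z : Vec d, P ((fun x => (x, z)) ⁻¹' Gᶜ) ≤ ENNReal.ofReal β := by
      intro z
      by_cases hz : z = 0
      · have : ((fun x : Fin T → Vec d => (x, z)) ⁻¹' Gᶜ) = ∅ := by
          ext x
          simp only [Set.mem_preimage, Set.mem_compl_iff, Set.mem_empty_iff_false,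
            iff_false, not_not, hG, Set.mem_setOf_eq, hz, chainB_zero]
          simp
        rw [this]; simp
      · have hznorm : 0 < ‖z‖ := norm_pos_iff.mpr hz
        have hcz : 0 < c * ‖z‖^2 := by positivity
        have hsub : ((fun x : Fin T → Vec d => (x, z)) ⁻¹' Gᶜ) ⊆
            {x : Fin T → Vec d | ENNReal.ofReal (c * ‖z‖^2) ≤
              ENNReal.ofReal (‖chainB η (ext0 x) j z k‖^2)} := by
          intro x hx
          simp only [Set.mem_preimage, Set.mem_compl_iff, hG, Set.mem_setOf_eq, not_le] at hx
          exact ENNReal.ofReal_le_ofReal hx.le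
        refine le_trans (measure_mono hsub) ?_
        refine le_trans (meas_ge_le_lintegral_div (measurable_chain_fn η j k z).aemeasurable
          (by simp [hcz]) ENNReal.ofReal_ne_top) ?_
        have hnum : ∫⁻ x, ENNReal.ofReal (‖chainB η (ext0 x) j z k‖^2) ∂P ≤
            ENNReal.ofReal (Real.exp (-(η*μ))^k * ‖z‖^2) :=
          chain_lintegral η μ hstep k j z (by omega)
        refine le_trans (ENNReal.div_le_div_right hnum _) ?_
        apply ENNReal.div_le_of_le_mul
        rw [← ENNReal.ofReal_mul hβ.le]
        apply ENNReal.ofReal_le_ofReal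
        rw [hEk, hc]
        field_simp
        exact le_rfl
    calc ∫⁻ z, P ((fun x => (x, z)) ⁻¹' Gᶜ) ∂νz ≤ ∫⁻ _, ENNReal.ofReal β ∂νz :=
          lintegral_mono hz_bound
    _ = ENNReal.ofReal β := by simp
  have h1 : (P.prod νz) Gᶜ = 1 - (P.prod νz) G := prob_compl_eq_one_sub hGm
  have h2 : (P.prod νz) G = 1 - (P.prod νz) Gᶜ := by
    rw [h1, ENNReal.sub_sub_cancel ENNReal.one_ne_top prob_le_one]
  calc 1 - ENNReal.ofReal β ≤ 1 - (P.prod νz) Gᶜ := tsub_le_tsub_left hcompl 1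
  _ = (P.prod νz) G := h2.symm
end
end

section
/- Let x_0, x_1, … ∈ ℝ^d be i.i.d. random vectors with E[x xᵀ] = H, smallest eigenvalue λ_min(H) = μ > 0, and E[‖x‖₂² x xᵀ] ⪯ R_x²·H. Consider the noiseless SGD recursion w_t − w* = (I − η·x_{t−1} x_{t−1}ᵀ)·(w_{t−1} − w*) with stepsize η ≤ 1/R_x² and deterministic initialization w_0. Then for every t ≥ 0: E[‖w_t − w*‖²] ≤ (1 − ημ)^t·‖w_0 − w*‖² ≤ e^{−ημt}·‖w_0 − w*‖². -/
set_option autoImplicit false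


open MeasureTheory ProbabilityTheory Real Matrix
open scoped ENNReal NNReal RealInnerProductSpace BigOperators

noncomputable section

/-! ### Auxiliary lemmas -/

def quad {d : ℕ} (A : Matrix (Fin d) (Fin d) ℝ) (v : Fin d → ℝ) : ℝ :=
  ∑ i, ∑ k, v i * (A i k * v k)

section
variable {d : ℕ}

lemma sgd_inner_sum (x v : Vec d) : ⟪x, v⟫ = ∑ i, x i * v i := by
  simp [PiLp.inner_apply, RCLike.inner_apply, conj_trivial, mul_comm]

lemma sgd_norm_sq_sum (x : Vec d) : ‖x‖^2 = ∑ i, (x i)^2 := by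
  rw [EuclideanSpace.norm_eq, Real.sq_sqrt (by positivity)]; simp [sq_abs]

lemma sgd_pair_le (x : Vec d) (i k : Fin d) : |x i * x k| ≤ ‖x‖^2 := by
  have h2 : (x i)^2 ≤ ‖x‖^2 := by
    rw [sgd_norm_sq_sum]; exact Finset.single_le_sum (fun j _ => sq_nonneg (x j)) (Finset.mem_univ i)
  have h3 : (x k)^2 ≤ ‖x‖^2 := by
    rw [sgd_norm_sq_sum]; exact Finset.single_le_sum (fun j _ => sq_nonneg (x j)) (Finset.mem_univ k)
  have h1 : |x i * x k| ≤ ((x i)^2 + (x k)^2)/2 := by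
    rw [abs_mul]; nlinarith [sq_nonneg (|x i| - |x k|), sq_abs (x i), sq_abs (x k),
      abs_nonneg (x i), abs_nonneg (x k)]
  linarith

lemma sgd_meas_pair (i k : Fin d) : Measurable fun x : Vec d => x i * x k :=
  ((PiLp.continuous_apply 2 _ i).mul (PiLp.continuous_apply 2 _ k)).measurable

lemma sgd_quad_nonneg {A : Matrix (Fin d) (Fin d) ℝ} (hA : A.PosSemidef) (v : Fin d → ℝ) :
    0 ≤ quad A v := by
  have := hA.dotProduct_mulVec_nonneg v
  simp only [star_trivial, RCLike.re_to_real] at this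
  simpa [quad, dotProduct, Matrix.mulVec, Finset.mul_sum] using this

lemma sgd_quad_sub_smul (c : ℝ) (A B : Matrix (Fin d) (Fin d) ℝ) (v : Fin d → ℝ) :
    quad (c • A - B) v = c * quad A v - quad B v := by
  unfold quad
  rw [Finset.mul_sum, ← Finset.sum_sub_distrib]
  refine Finset.sum_congr rfl fun i _ => ?_
  rw [Finset.mul_sum, ← Finset.sum_sub_distrib]
  refine Finset.sum_congr rfl fun k _ => ?_
  simp only [Matrix.sub_apply, Matrix.smul_apply, smul_eq_mul]
  ring

lemma sgd_rayleigh (hd : 0 < d) (H : Matrix (Fin d) (Fin d) ℝ) (hH : H.IsHermitian)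
    (v : Vec d) : lamMin hH * ‖v‖^2 ≤ quad H v := by
  classical
  have : Nonempty (Fin d) := ⟨⟨0, hd⟩⟩
  set b := hH.eigenvectorBasis
  set w : Vec d := (WithLp.equiv 2 (Fin d → ℝ)).symm (H *ᵥ v)
  have hbw : ∀ j, ⟪b j, w⟫ = hH.eigenvalues j * ⟪b j, v⟫ := by
    intro j
    have h1 : ⟪b j, w⟫ = (⇑(b j)) ⬝ᵥ (H *ᵥ v) := by
      simp [PiLp.inner_apply, RCLike.inner_apply, conj_trivial, dotProduct, w, mul_comm]
    have h2 : (⇑(b j)) ⬝ᵥ (H *ᵥ v) = (H *ᵥ ⇑(b j)) ⬝ᵥ v := by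
      rw [Matrix.dotProduct_mulVec, ← Matrix.mulVec_transpose]
      congr 1
      rw [← Matrix.conjTranspose_eq_transpose_of_trivial, hH.eq]
    rw [h1, h2, hH.mulVec_eigenvectorBasis]
    simp [PiLp.inner_apply, RCLike.inner_apply, conj_trivial, dotProduct, Finset.mul_sum,
      mul_comm, mul_left_comm, b]
  have hquad : quad H v = ∑ j, hH.eigenvalues j * ⟪b j, v⟫^2 := by
    have h0 : quad H v = ⟪v, w⟫ := by
      simp [quad, PiLp.inner_apply, RCLike.inner_apply, conj_trivial, w, Matrix.mulVec,
        dotProduct, Finset.mul_sum, Finset.sum_mul, mul_comm]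
    rw [h0, ← b.sum_inner_mul_inner v w]
    refine Finset.sum_congr rfl fun j _ => ?_
    rw [hbw j, real_inner_comm v (b j)]
    ring
  have hnorm : ‖v‖^2 = ∑ j, ⟪b j, v⟫^2 := by
    have := b.sum_inner_mul_inner v v
    rw [real_inner_self_eq_norm_sq] at this
    rw [← this]
    refine Finset.sum_congr rfl fun j _ => ?_
    rw [real_inner_comm v (b j)]; ring
  rw [hquad, hnorm, Finset.mul_sum]
  refine Finset.sum_le_sum fun j _ => ?_
  have hle : lamMin hH ≤ hH.eigenvalues j := ciInf_le (Finite.bddBelow_range _) j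
  exact mul_le_mul_of_nonneg_right hle (sq_nonneg _)

variable (ν : Measure (Vec d))

lemma sgd_int_pair (hmom : Integrable (fun x : Vec d => ‖x‖ ^ 2) ν) (i k : Fin d) :
    Integrable (fun x : Vec d => x i * x k) ν := by
  refine Integrable.mono hmom (sgd_meas_pair i k).aestronglyMeasurable ?_
  filter_upwards with x
  rw [Real.norm_eq_abs, Real.norm_eq_abs, abs_of_nonneg (by positivity : (0:ℝ) ≤ ‖x‖^2)]
  exact sgd_pair_le x i k

lemma sgd_int_norm_pair (hmom4 : Integrable (fun x : Vec d => ‖x‖ ^ 4) ν) (i k : Fin d) :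
    Integrable (fun x : Vec d => ‖x‖^2 * (x i * x k)) ν := by
  refine Integrable.mono hmom4 (((continuous_norm.pow 2).measurable.mul
    (sgd_meas_pair i k)).aestronglyMeasurable) ?_
  filter_upwards with x
  rw [Real.norm_eq_abs, Real.norm_eq_abs, abs_of_nonneg (by positivity : (0:ℝ) ≤ ‖x‖^4),
    abs_mul, abs_of_nonneg (by positivity : (0:ℝ) ≤ ‖x‖^2)]
  calc ‖x‖^2 * |x i * x k| ≤ ‖x‖^2 * ‖x‖^2 :=
        mul_le_mul_of_nonneg_left (sgd_pair_le x i k) (by positivity)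
    _ = ‖x‖^4 := by ring

lemma sgd_inner_sq_expand (x v : Vec d) :
    ⟪x, v⟫^2 = ∑ i, ∑ k, v i * (v k * (x i * x k)) := by
  rw [sgd_inner_sum, sq, Finset.sum_mul_sum]
  refine Finset.sum_congr rfl fun i _ => Finset.sum_congr rfl fun k _ => by ring

lemma sgd_int_inner_sq (hmom : Integrable (fun x : Vec d => ‖x‖ ^ 2) ν) (v : Vec d) :
    Integrable (fun x : Vec d => ⟪x, v⟫^2) ν := by
  have he : (fun x : Vec d => ⟪x, v⟫^2)
      = fun x => ∑ i, ∑ k, v i * (v k * (x i * x k)) := by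
    funext x; exact sgd_inner_sq_expand x v
  rw [he]
  exact integrable_finset_sum _ fun i _ => integrable_finset_sum _ fun k _ =>
    (((sgd_int_pair ν hmom i k).const_mul (v k)).const_mul (v i))

lemma sgd_int_norm_inner_sq (hmom4 : Integrable (fun x : Vec d => ‖x‖ ^ 4) ν) (v : Vec d) :
    Integrable (fun x : Vec d => ‖x‖^2 * ⟪x, v⟫^2) ν := by
  have he : (fun x : Vec d => ‖x‖^2 * ⟪x, v⟫^2)
      = fun x => ∑ i, ∑ k, v i * (v k * (‖x‖^2 * (x i * x k))) := by
    funext x; rw [sgd_inner_sq_expand, Finset.mul_sum]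
    refine Finset.sum_congr rfl fun i _ => ?_
    rw [Finset.mul_sum]
    exact Finset.sum_congr rfl fun k _ => by ring
  rw [he]
  exact integrable_finset_sum _ fun i _ => integrable_finset_sum _ fun k _ =>
    (((sgd_int_norm_pair ν hmom4 i k).const_mul (v k)).const_mul (v i))

lemma sgd_int_inner4 (hmom4 : Integrable (fun x : Vec d => ‖x‖ ^ 4) ν) (v : Vec d) :
    Integrable (fun x : Vec d => ⟪x, v⟫^4) ν := by
  have hm : Measurable fun x : Vec d => ⟪x, v⟫ := measurable_id'.inner measurable_const
  refine Integrable.mono (hmom4.const_mul (‖v‖^4)) ((hm.pow_const 4).aestronglyMeasurable) ?_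
  filter_upwards with x
  have h := abs_real_inner_le_norm x v
  rw [Real.norm_eq_abs, Real.norm_eq_abs, abs_of_nonneg (by positivity : (0:ℝ) ≤ ⟪x,v⟫^4),
    abs_of_nonneg (by positivity : (0:ℝ) ≤ ‖v‖^4 * ‖x‖^4)]
  calc ⟪x,v⟫^4 = (|⟪x,v⟫|^2)^2 := by rw [sq_abs]; ring
    _ ≤ ((‖x‖*‖v‖)^2)^2 := by
        have h2 : |⟪x,v⟫|^2 ≤ (‖x‖*‖v‖)^2 := by
          have := abs_nonneg ⟪x,v⟫; nlinarith
        nlinarith [sq_nonneg (|⟪x,v⟫|), sq_nonneg (‖x‖*‖v‖)]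
    _ = ‖v‖^4 * ‖x‖^4 := by ring

lemma sgd_integral_inner_sq (hmom : Integrable (fun x : Vec d => ‖x‖ ^ 2) ν)
    (H : Matrix (Fin d) (Fin d) ℝ)
    (hH : ∀ i k, H i k = ∫ x, x i * x k ∂ν) (v : Vec d) :
    ∫ x, ⟪x, v⟫^2 ∂ν = quad H v := by
  have he : (fun x : Vec d => ⟪x, v⟫^2)
      = fun x => ∑ i, ∑ k, v i * (v k * (x i * x k)) := by
    funext x; exact sgd_inner_sq_expand x v
  rw [he, integral_finset_sum _ fun i _ => integrable_finset_sum _ fun k _ =>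
    (((sgd_int_pair ν hmom i k).const_mul (v k)).const_mul (v i))]
  refine Finset.sum_congr rfl fun i _ => ?_
  rw [integral_finset_sum _ fun k _ =>
    (((sgd_int_pair ν hmom i k).const_mul (v k)).const_mul (v i))]
  refine Finset.sum_congr rfl fun k _ => ?_
  rw [integral_const_mul, integral_const_mul, ← hH i k]; ring

lemma sgd_integral_norm_inner_sq (hmom4 : Integrable (fun x : Vec d => ‖x‖ ^ 4) ν)
    (M4 : Matrix (Fin d) (Fin d) ℝ)
    (hM4 : ∀ i k, M4 i k = ∫ x, ‖x‖ ^ 2 * (x i * x k) ∂ν) (v : Vec d) :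
    ∫ x, ‖x‖^2 * ⟪x, v⟫^2 ∂ν = quad M4 v := by
  have he : (fun x : Vec d => ‖x‖^2 * ⟪x, v⟫^2)
      = fun x => ∑ i, ∑ k, v i * (v k * (‖x‖^2 * (x i * x k))) := by
    funext x; rw [sgd_inner_sq_expand, Finset.mul_sum]
    refine Finset.sum_congr rfl fun i _ => ?_
    rw [Finset.mul_sum]
    exact Finset.sum_congr rfl fun k _ => by ring
  rw [he, integral_finset_sum _ fun i _ => integrable_finset_sum _ fun k _ =>
    (((sgd_int_norm_pair ν hmom4 i k).const_mul (v k)).const_mul (v i))]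
  refine Finset.sum_congr rfl fun i _ => ?_
  rw [integral_finset_sum _ fun k _ =>
    (((sgd_int_norm_pair ν hmom4 i k).const_mul (v k)).const_mul (v i))]
  refine Finset.sum_congr rfl fun k _ => ?_
  rw [integral_const_mul, integral_const_mul, ← hM4 i k]; ring

lemma sgd_bapp_norm_sq (η : ℝ) (x v : Vec d) :
    ‖Bapp η x v‖^2 = ‖v‖^2 - 2*η*⟪x,v⟫^2 + η^2*(‖x‖^2*⟪x,v⟫^2) := by
  rw [Bapp, @norm_sub_sq_real]
  rw [real_inner_smul_right, real_inner_smul_right, real_inner_comm v x]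
  rw [norm_smul, norm_smul, mul_pow, mul_pow]
  simp [Real.norm_eq_abs, sq_abs]
  ring

lemma sgd_int_bapp [IsFiniteMeasure ν] (hmom : Integrable (fun x : Vec d => ‖x‖ ^ 2) ν)
    (hmom4 : Integrable (fun x : Vec d => ‖x‖ ^ 4) ν) (η : ℝ) (v : Vec d) :
    Integrable (fun x : Vec d => ‖Bapp η x v‖^2) ν := by
  have he : (fun x : Vec d => ‖Bapp η x v‖^2)
      = fun x => ‖v‖^2 - 2*η*⟪x,v⟫^2 + η^2*(‖x‖^2*⟪x,v⟫^2) := by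
    funext x; exact sgd_bapp_norm_sq η x v
  rw [he]
  exact (((integrable_const _).sub ((sgd_int_inner_sq ν hmom v).const_mul _)).add
    ((sgd_int_norm_inner_sq ν hmom4 v).const_mul _))

lemma sgd_integral_bapp [IsProbabilityMeasure ν]
    (hmom : Integrable (fun x : Vec d => ‖x‖ ^ 2) ν)
    (hmom4 : Integrable (fun x : Vec d => ‖x‖ ^ 4) ν)
    (η : ℝ) (v : Vec d) (H M4 : Matrix (Fin d) (Fin d) ℝ)
    (hH : ∀ i k, H i k = ∫ x, x i * x k ∂ν)
    (hM4 : ∀ i k, M4 i k = ∫ x, ‖x‖ ^ 2 * (x i * x k) ∂ν) :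
    ∫ x, ‖Bapp η x v‖^2 ∂ν = ‖v‖^2 - 2*η*quad H v + η^2*quad M4 v := by
  have he : (fun x : Vec d => ‖Bapp η x v‖^2)
      = fun x => ‖v‖^2 - 2*η*⟪x,v⟫^2 + η^2*(‖x‖^2*⟪x,v⟫^2) := by
    funext x; exact sgd_bapp_norm_sq η x v
  have hf3 : Integrable (fun x : Vec d => 2*η*⟪x,v⟫^2) ν :=
    (sgd_int_inner_sq ν hmom v).const_mul _
  have hf1 : Integrable (fun x : Vec d => ‖v‖^2 - 2*η*⟪x,v⟫^2) ν :=
    (integrable_const _).sub hf3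
  have hf2 : Integrable (fun x : Vec d => η^2*(‖x‖^2*⟪x,v⟫^2)) ν :=
    (sgd_int_norm_inner_sq ν hmom4 v).const_mul _
  rw [he, integral_add hf1 hf2, integral_sub (integrable_const _) hf3,
    integral_const, integral_const_mul, integral_const_mul,
    sgd_integral_inner_sq ν hmom H hH v, sgd_integral_norm_inner_sq ν hmom4 M4 hM4 v]
  simp

lemma sgd_jensen [IsProbabilityMeasure ν] (Y : Vec d → ℝ)
    (h1 : Integrable Y ν) (h2 : Integrable (fun x => Y x ^ 2) ν) :
    (∫ x, Y x ∂ν)^2 ≤ ∫ x, Y x ^ 2 ∂ν := by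
  set c := ∫ x, Y x ∂ν
  have h0 : 0 ≤ ∫ x, (Y x - c)^2 ∂ν := integral_nonneg fun x => sq_nonneg _
  have he : (fun x => (Y x - c)^2) = fun x => Y x ^ 2 - (2*c) * Y x + c^2 := by
    funext x; ring
  have ha : Integrable (fun x => Y x ^ 2 - (2*c) * Y x) ν := h2.sub (h1.const_mul _)
  have hb : Integrable (fun x => (2*c) * Y x) ν := h1.const_mul _
  rw [he, integral_add ha (integrable_const _),
    integral_sub h2 hb, integral_const_mul, integral_const] at h0
  simp only [measure_univ, ENNReal.toReal_one, probReal_univ, smul_eq_mul, one_mul] at h0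
  nlinarith [h0]

lemma sgd_chain_congr (η : ℝ) (v : Vec d) : ∀ (k : ℕ) (y y' : ℕ → Vec d),
    (∀ j < k, y j = y' j) → chainB η y 0 v k = chainB η y' 0 v k := by
  intro k
  induction k with
  | zero => intro y y' _; rfl
  | succ k ih =>
    intro y y' h
    show Bapp η (y (0 + k)) _ = Bapp η (y' (0 + k)) _
    rw [ih y y' (fun j hj => h j (Nat.lt_succ_of_lt hj)), h (0 + k) (by omega)]

lemma sgd_chain_shift (η : ℝ) : ∀ (k : ℕ) (y : ℕ → Vec d) (v : Vec d),
    chainB η y 0 v (k + 1) = chainB η (fun n => y (n + 1)) 0 (Bapp η (y 0) v) k := by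
  intro k
  induction k with
  | zero => intro y v; show Bapp η (y (0+0)) v = Bapp η (y 0) v; rw [Nat.zero_add]
  | succ k ih =>
    intro y v
    show Bapp η (y (0 + (k+1))) (chainB η y 0 v (k+1)) = Bapp η ((fun n => y (n+1)) (0 + k)) _
    rw [ih y v, Nat.zero_add, Nat.zero_add]

lemma sgd_meas_bapp (η : ℝ) {α : Type*} [MeasurableSpace α] {f g : α → Vec d}
    (hf : Measurable f) (hg : Measurable g) :
    Measurable fun a => Bapp η (f a) (g a) := by
  have : Measurable fun a => ⟪f a, g a⟫ := hf.inner hg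
  exact hg.sub ((this.smul hf).const_smul η)

lemma sgd_meas_chain (η : ℝ) {N : ℕ} (k : ℕ) :
    Measurable fun q : (Fin N → Vec d) × Vec d => chainB η (ext0 q.1) 0 q.2 k := by
  induction k with
  | zero => exact measurable_snd
  | succ k ih =>
    show Measurable fun q : (Fin N → Vec d) × Vec d =>
      Bapp η (ext0 q.1 (0 + k)) (chainB η (ext0 q.1) 0 q.2 k)
    refine sgd_meas_bapp η ?_ ih
    by_cases h : 0 + k < N
    · have he : (fun q : (Fin N → Vec d) × Vec d => ext0 q.1 (0 + k))
          = fun q => q.1 ⟨0 + k, h⟩ := by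
        funext q; simp only [ext0]; rw [dif_pos (by omega : 0 + k < N)]
      rw [he]
      exact (measurable_pi_apply _).comp measurable_fst
    · have he : (fun q : (Fin N → Vec d) × Vec d => ext0 q.1 (0 + k))
          = fun _ => 0 := by
        funext q; simp only [ext0]; rw [dif_neg h]
      rw [he]; exact measurable_const

end

/-- contraction of the noiseless SGD recursion
`w_t − w* = (I − η x_{t−1} x_{t−1}ᵀ)(w_{t−1} − w*)` for i.i.d. `x` with `E[x xᵀ] = H`,
`λ_min(H) = μ > 0`, `E[‖x‖² x xᵀ] ⪯ R_x² H` and stepsize `η ≤ 1/R_x²`: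
`E‖w_t − w*‖² ≤ (1 − ημ)^t ‖w_0 − w*‖² ≤ e^{−ημt} ‖w_0 − w*‖²` for every `t ≥ 0`. -/
theorem noiseless_sgd_contraction
    (d : ℕ) (hd : 0 < d)
    (ν : Measure (Vec d)) [IsProbabilityMeasure ν]
    (hmom : Integrable (fun x : Vec d => ‖x‖ ^ 2) ν)
    (hmom4 : Integrable (fun x : Vec d => ‖x‖ ^ 4) ν)
    (H M4 : Matrix (Fin d) (Fin d) ℝ)
    (hH : ∀ i k, H i k = ∫ x, x i * x k ∂ν)
    (hM4 : ∀ i k, M4 i k = ∫ x, ‖x‖ ^ 2 * (x i * x k) ∂ν)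
    (hHherm : H.IsHermitian) (μ : ℝ) (hμdef : μ = lamMin hHherm) (hμ : 0 < μ)
    (Rx : ℝ) (hRx : (Rx ^ 2 • H - M4).PosSemidef)
    (η : ℝ) (hη0 : 0 < η) (hη : η ≤ 1 / Rx ^ 2)
    (w0 wstar : Vec d) :
    ∀ t : ℕ,
      (∫ x, ‖chainB η (ext0 x) 0 (w0 - wstar) t‖ ^ 2
          ∂(Measure.pi fun _ : Fin t => ν)) ≤
        (1 - η * μ) ^ t * ‖w0 - wstar‖ ^ 2 ∧
      (1 - η * μ) ^ t * ‖w0 - wstar‖ ^ 2 ≤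
        Real.exp (-(η * μ) * (t : ℝ)) * ‖w0 - wstar‖ ^ 2 := by
  -- positivity of `Rx ^ 2`
  have hRx2 : 0 < Rx ^ 2 := by
    rcases (sq_nonneg Rx).lt_or_eq with h | h
    · exact h
    · exfalso; rw [← h] at hη; simp at hη; linarith
  have hηR : η * Rx ^ 2 ≤ 1 := by
    rw [le_div_iff₀ hRx2] at hη; exact hη
  -- quadratic form bounds
  have hqH : ∀ v : Vec d, μ * ‖v‖^2 ≤ quad H v := by
    intro v; rw [hμdef]; exact sgd_rayleigh hd H hHherm v
  have hqM : ∀ v : Vec d, quad M4 v ≤ Rx ^ 2 * quad H v := by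
    intro v
    have h0 := sgd_quad_nonneg hRx v
    rw [sgd_quad_sub_smul] at h0
    linarith
  -- one-step contraction
  have honestep : ∀ v : Vec d, ∫ x, ‖Bapp η x v‖^2 ∂ν ≤ (1 - η * μ) * ‖v‖^2 := by
    intro v
    rw [sgd_integral_bapp ν hmom hmom4 η v H M4 hH hM4]
    have hq0 : 0 ≤ quad H v := le_trans (by positivity) (hqH v)
    have f1 : η^2 * quad M4 v ≤ η^2 * (Rx^2 * quad H v) :=
      mul_le_mul_of_nonneg_left (hqM v) (sq_nonneg η)
    have f2 : (η * Rx^2) * (η * quad H v) ≤ 1 * (η * quad H v) :=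
      mul_le_mul_of_nonneg_right hηR (mul_nonneg hη0.le hq0)
    have f3 : η * (μ * ‖v‖^2) ≤ η * quad H v :=
      mul_le_mul_of_nonneg_left (hqH v) hη0.le
    nlinarith [f1, f2, f3]
  -- `η * μ ≤ 1`
  have hημ : η * μ ≤ 1 := by
    set v₀ : Vec d := EuclideanSpace.single (⟨0, hd⟩ : Fin d) (1:ℝ) with hv₀
    have hn : ‖v₀‖ = 1 := by rw [hv₀, EuclideanSpace.norm_single]; simp
    have hq0 : μ ≤ quad H v₀ := by
      have := hqH v₀; rw [hn] at this; simpa using this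
    have hqpos : 0 < quad H v₀ := lt_of_lt_of_le hμ hq0
    have hJ : (quad H v₀)^2 ≤ ∫ x, ⟪x, v₀⟫^4 ∂ν := by
      have h2 : Integrable (fun x : Vec d => (⟪x, v₀⟫^2)^2) ν := by
        have he : (fun x : Vec d => (⟪x, v₀⟫^2)^2) = fun x => ⟪x, v₀⟫^4 := by
          funext x; ring
        rw [he]; exact sgd_int_inner4 ν hmom4 v₀
      have := sgd_jensen ν (fun x => ⟪x, v₀⟫^2) (sgd_int_inner_sq ν hmom v₀) h2
      rw [sgd_integral_inner_sq ν hmom H hH v₀] at this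
      have he : (fun x : Vec d => (⟪x, v₀⟫^2)^2) = fun x => ⟪x, v₀⟫^4 := by
        funext x; ring
      rw [he] at this
      exact this
    have h4 : ∫ x, ⟪x, v₀⟫^4 ∂ν ≤ quad M4 v₀ := by
      have hpt : ∀ x : Vec d, ⟪x, v₀⟫^4 ≤ ‖x‖^2 * ⟪x, v₀⟫^2 := by
        intro x
        have h := abs_real_inner_le_norm x v₀
        rw [hn, mul_one] at h
        have h2 : ⟪x, v₀⟫^2 ≤ ‖x‖^2 := by
          have := sq_abs ⟪x, v₀⟫
          nlinarith [abs_nonneg ⟪x, v₀⟫, norm_nonneg x]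
        nlinarith [sq_nonneg ⟪x, v₀⟫]
      have := integral_mono (sgd_int_inner4 ν hmom4 v₀)
        (sgd_int_norm_inner_sq ν hmom4 v₀) hpt
      rwa [sgd_integral_norm_inner_sq ν hmom4 M4 hM4 v₀] at this
    have hqle : quad H v₀ ≤ Rx ^ 2 := by
      have hcomb : (quad H v₀)^2 ≤ Rx ^ 2 * quad H v₀ := le_trans (le_trans hJ h4) (hqM v₀)
      nlinarith [hqpos]
    calc η * μ ≤ η * Rx ^ 2 := mul_le_mul_of_nonneg_left (le_trans hq0 hqle) hη0.le
      _ ≤ 1 := hηR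
  have hc : 0 ≤ 1 - η * μ := by linarith
  -- main induction (in `ℝ≥0∞`)
  have key : ∀ (t : ℕ) (v : Vec d),
      (∫⁻ x, ENNReal.ofReal (‖chainB η (ext0 x) 0 v t‖^2)
        ∂(Measure.pi fun _ : Fin t => ν)) ≤ ENNReal.ofReal ((1 - η * μ)^t * ‖v‖^2) := by
    intro t
    induction t with
    | zero =>
      intro v
      have : (fun x : Fin 0 → Vec d => ENNReal.ofReal (‖chainB η (ext0 x) 0 v 0‖^2))
          = fun _ => ENNReal.ofReal (‖v‖^2) := rfl
      rw [this, lintegral_const, measure_univ, mul_one]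
      simp
    | succ t ih =>
      intro v
      have hmp := MeasureTheory.measurePreserving_piFinSuccAbove
        (fun _ : Fin (t+1) => ν) 0
      set e := MeasurableEquiv.piFinSuccAbove (fun _ : Fin (t+1) => Vec d) 0 with he
      have hgm : Measurable fun x : Fin (t+1) → Vec d =>
          ENNReal.ofReal (‖chainB η (ext0 x) 0 v (t+1)‖^2) := by
        have h1 : Measurable fun x : Fin (t+1) → Vec d => chainB η (ext0 x) 0 v (t+1) :=
          (sgd_meas_chain η (t+1)).comp (measurable_id.prodMk measurable_const)
        exact ENNReal.measurable_ofReal.comp ((h1.norm).pow_const 2)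
      rw [← (MeasurePreserving.symm e hmp).lintegral_comp hgm]
      have hpt : ∀ p : Vec d × (Fin t → Vec d),
          chainB η (ext0 (e.symm p)) 0 v (t+1)
            = chainB η (ext0 p.2) 0 (Bapp η p.1 v) t := by
        intro p
        rw [sgd_chain_shift]
        have hsymm : e.symm p = Fin.insertNth 0 p.1 p.2 := rfl
        have h0 : ext0 (e.symm p) 0 = p.1 := by
          have hz : (⟨0, Nat.succ_pos t⟩ : Fin (t+1)) = 0 := rfl
          simp only [ext0, dif_pos (Nat.succ_pos t), hsymm, hz]
          exact Fin.insertNth_apply_same (α := fun _ : Fin (t+1) => Vec d) 0 p.1 p.2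
        rw [h0]
        refine sgd_chain_congr η (Bapp η p.1 v) t _ _ fun j hj => ?_
        have hj1 : j + 1 < t + 1 := by omega
        simp only [ext0, dif_pos hj1, dif_pos hj, hsymm]
        have hsucc : (⟨j+1, hj1⟩ : Fin (t+1)) = (0 : Fin (t+1)).succAbove ⟨j, hj⟩ := by
          rw [Fin.succAbove_zero]; rfl
        rw [hsucc]
        exact Fin.insertNth_apply_succAbove (α := fun _ : Fin (t+1) => Vec d) 0 p.1 p.2 _
      have hint : (∫⁻ p, ENNReal.ofReal (‖chainB η (ext0 (e.symm p)) 0 v (t+1)‖^2)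
            ∂(ν.prod (Measure.pi fun _ : Fin t => ν)))
          = ∫⁻ x₀, (∫⁻ r, ENNReal.ofReal (‖chainB η (ext0 r) 0 (Bapp η x₀ v) t‖^2)
            ∂(Measure.pi fun _ : Fin t => ν)) ∂ν := by
        have hfe : (fun p : Vec d × (Fin t → Vec d) =>
            ENNReal.ofReal (‖chainB η (ext0 (e.symm p)) 0 v (t+1)‖^2))
            = fun p => ENNReal.ofReal (‖chainB η (ext0 p.2) 0 (Bapp η p.1 v) t‖^2) := by
          funext p; rw [hpt p]
        rw [hfe]
        refine MeasureTheory.lintegral_prod _ ?_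
        have h1 : Measurable fun p : Vec d × (Fin t → Vec d) =>
            chainB η (ext0 p.2) 0 (Bapp η p.1 v) t :=
          (sgd_meas_chain η t).comp (measurable_snd.prodMk
            (sgd_meas_bapp η measurable_fst measurable_const))
        exact (ENNReal.measurable_ofReal.comp ((h1.norm).pow_const 2)).aemeasurable
      rw [hint]
      calc ∫⁻ x₀, (∫⁻ r, ENNReal.ofReal (‖chainB η (ext0 r) 0 (Bapp η x₀ v) t‖^2)
            ∂(Measure.pi fun _ : Fin t => ν)) ∂ν
          ≤ ∫⁻ x₀, ENNReal.ofReal ((1 - η * μ)^t * ‖Bapp η x₀ v‖^2) ∂ν :=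
            lintegral_mono fun x₀ => ih (Bapp η x₀ v)
        _ = ENNReal.ofReal ((1 - η * μ)^t) * ∫⁻ x₀, ENNReal.ofReal (‖Bapp η x₀ v‖^2) ∂ν := by
            simp_rw [fun x₀ : Vec d => ENNReal.ofReal_mul (p := (1-η*μ)^t)
              (q := ‖Bapp η x₀ v‖^2) (pow_nonneg hc t)]
            exact lintegral_const_mul' _ _ ENNReal.ofReal_ne_top
        _ = ENNReal.ofReal ((1 - η * μ)^t) * ENNReal.ofReal (∫ x₀, ‖Bapp η x₀ v‖^2 ∂ν) := by
            rw [MeasureTheory.ofReal_integral_eq_lintegral_ofReal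
              (sgd_int_bapp ν hmom hmom4 η v)
              (Filter.Eventually.of_forall fun x => by positivity)]
        _ ≤ ENNReal.ofReal ((1 - η * μ)^t) * ENNReal.ofReal ((1 - η * μ) * ‖v‖^2) :=
            mul_le_mul_right (ENNReal.ofReal_le_ofReal (honestep v)) _
        _ = ENNReal.ofReal ((1 - η * μ)^(t+1) * ‖v‖^2) := by
            rw [← ENNReal.ofReal_mul (pow_nonneg hc t)]
            congr 1; ring
  -- real version of the bound
  have real_key : ∀ (t : ℕ) (v : Vec d),
      (∫ x, ‖chainB η (ext0 x) 0 v t‖^2 ∂(Measure.pi fun _ : Fin t => ν))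
        ≤ (1 - η * μ)^t * ‖v‖^2 := by
    intro t v
    have hm : AEStronglyMeasurable (fun x : Fin t → Vec d => ‖chainB η (ext0 x) 0 v t‖^2)
        (Measure.pi fun _ : Fin t => ν) := by
      have h1 : Measurable fun x : Fin t → Vec d => chainB η (ext0 x) 0 v t :=
        (sgd_meas_chain η t).comp (measurable_id.prodMk measurable_const)
      exact ((h1.norm).pow_const 2).aestronglyMeasurable
    rw [integral_eq_lintegral_of_nonneg_ae (Filter.Eventually.of_forall fun x => by positivity) hm]
    exact ENNReal.toReal_le_of_le_ofReal (by positivity) (key t v)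
  intro t
  constructor
  · exact real_key t (w0 - wstar)
  · have h1 : (1 - η * μ)^t ≤ Real.exp (-(η * μ))^t :=
      pow_le_pow_left₀ hc (by linarith [Real.add_one_le_exp (-(η * μ))]) t
    have h2 : Real.exp (-(η * μ) * (t : ℝ)) = Real.exp (-(η * μ))^t := by
      rw [mul_comm, Real.exp_nat_mul]
    rw [h2]
    exact mul_le_mul_of_nonneg_right h1 (by positivity)
end
end
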